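/- Let n ≥ 1 and let K be a symmetric n×n integer matrix with K_{ij} ≤ 0 for all i ≠ j and with every row sum ∑_j K_{ij} ≥ 0 (i.e., K is the Kirchhoff matrix of a quiver). Then for every 1 ≤ k ≤ n, the k-th smallest eigenvalue satisfies λ_k ≤ d_k + d_{k−1}, where d_1 ≤ … ≤ d_n are the diagonal entries of K listed in increasing order and d_0 = 0. -/

import Mathlib

open Matrix Finset
open scoped RealInnerProductSpace

private lemma inner_eq_dot' (N : ℕ) (u w : EuclideanSpace ℝ (Fin N)) : ⟪u, w⟫ = u ⬝ᵥ w := by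
  simp [PiLp.inner_apply, dotProduct, mul_comm]

private lemma quad_expand' (N : ℕ) (B : Matrix (Fin N) (Fin N) ℝ) (hB : B.IsHermitian)
    (x : EuclideanSpace ℝ (Fin N)) :
    x ⬝ᵥ (B *ᵥ x) = ∑ i, hB.eigenvalues i *
      (⟪(hB.eigenvectorBasis i : EuclideanSpace ℝ (Fin N)), x⟫)^2 := by
  have hBt : Bᵀ = B := by
    have := hB.eq
    rwa [conjTranspose_eq_transpose_of_trivial] at this
  have e1 : ∀ v : Fin N → ℝ, v ᵥ* B = B *ᵥ v := by
    intro v; nth_rewrite 1 [← hBt]; exact vecMul_transpose B v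
  have hBx : ∀ i, ⟪(hB.eigenvectorBasis i : EuclideanSpace ℝ (Fin N)),
      (WithLp.toLp 2 (B *ᵥ x) : EuclideanSpace ℝ (Fin N))⟫ = hB.eigenvalues i *
      ⟪(hB.eigenvectorBasis i : EuclideanSpace ℝ (Fin N)), x⟫ := by
    intro i
    rw [inner_eq_dot', inner_eq_dot', WithLp.ofLp_toLp, dotProduct_mulVec, e1]
    erw [hB.mulVec_eigenvectorBasis i]
    rw [smul_dotProduct, smul_eq_mul]
  have h := hB.eigenvectorBasis.sum_inner_mul_inner x (WithLp.toLp 2 (B *ᵥ x) : EuclideanSpace ℝ (Fin N))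
  rw [inner_eq_dot', WithLp.ofLp_toLp] at h
  rw [← h]
  congr 1; funext i
  rw [hBx i, real_inner_comm x]
  ring

private lemma norm_expand' (N : ℕ) (B : Matrix (Fin N) (Fin N) ℝ) (hB : B.IsHermitian)
    (x : EuclideanSpace ℝ (Fin N)) :
    x ⬝ᵥ x = ∑ i, (⟪(hB.eigenvectorBasis i : EuclideanSpace ℝ (Fin N)), x⟫)^2 := by
  have h := hB.eigenvectorBasis.sum_inner_mul_inner x x
  rw [inner_eq_dot'] at h
  rw [← h]
  congr 1; funext i
  rw [real_inner_comm x]; ring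

private lemma micro' (a b μ X Y : ℝ) (ha : 0 ≤ a) (hb : 0 ≤ b) (hμ : a + b < μ) (hX : 0 < X)
    (hY : 0 ≤ Y) (h1 : (μ - a) * X ≤ a * Y) (h2 : (μ - b) * Y ≤ b * X) : False := by
  nlinarith [mul_le_mul_of_nonneg_left h2 ha,
    mul_le_mul_of_nonneg_right h1 (sub_pos.2 (show b < μ - a by linarith)).le]

private lemma cassini' {k : ℕ} (S : Matrix (Fin k) (Fin k) ℝ) (a b : ℝ)
    (ha : 0 ≤ a) (hb : 0 ≤ b)
    (hrowS : ∀ p, ∑ j ∈ Finset.univ.erase p, |S p j| ≤ S p p)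
    (hdiag : ∀ p, S p p ≤ a)
    (hpair : ∀ p q : Fin k, p ≠ q → S p p ≤ b ∨ S q q ≤ b)
    (μ : ℝ) (v : Fin k → ℝ) (hv : v ≠ 0) (heig : S *ᵥ v = μ • v) :
    μ ≤ a + b := by
  by_contra hcon
  push_neg at hcon
  have row : ∀ p : Fin k, (μ - S p p) * v p = ∑ j ∈ univ.erase p, S p j * v j := by
    intro p
    have hthis := congrFun heig p
    rw [Pi.smul_apply, smul_eq_mul] at hthis
    have h2 : (S *ᵥ v) p = ∑ j, S p j * v j := by rw [mulVec, dotProduct]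
    rw [h2, ← Finset.add_sum_erase _ _ (mem_univ p)] at hthis
    linarith [hthis]
  have rowbd : ∀ p c : Fin k, (∀ j ∈ univ.erase p, |v j| ≤ |v c|) →
      (μ - S p p) * |v p| ≤ S p p * |v c| := by
    intro p c hc
    have h0 : 0 ≤ μ - S p p := by have := hdiag p; linarith
    calc (μ - S p p) * |v p| = |(μ - S p p) * v p| := by
          rw [abs_mul, abs_of_nonneg h0]
      _ = |∑ j ∈ univ.erase p, S p j * v j| := by rw [row p]
      _ ≤ ∑ j ∈ univ.erase p, |S p j * v j| := Finset.abs_sum_le_sum_abs _ _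
      _ ≤ ∑ j ∈ univ.erase p, |S p j| * |v c| := by
          apply Finset.sum_le_sum
          intro j hj
          rw [abs_mul]
          exact mul_le_mul_of_nonneg_left (hc j hj) (abs_nonneg _)
      _ = (∑ j ∈ univ.erase p, |S p j|) * |v c| := by rw [Finset.sum_mul]
      _ ≤ S p p * |v c| := mul_le_mul_of_nonneg_right (hrowS p) (abs_nonneg _)
  have hne : (univ : Finset (Fin k)).Nonempty := by
    rcases Finset.eq_empty_or_nonempty (univ : Finset (Fin k)) with h | h
    · exfalso; apply hv; funext j; exact absurd (mem_univ j) (h ▸ notMem_empty j)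
    · exact h
  obtain ⟨p, -, hp⟩ := Finset.exists_max_image univ (fun j => |v j|) hne
  have hvp : 0 < |v p| := by
    rcases lt_or_ge 0 |v p| with h | h
    · exact h
    · exfalso; apply hv; funext j
      have h1 := hp j (mem_univ j)
      have hja := abs_nonneg (v j)
      have : |v j| = 0 := le_antisymm (h1.trans h) hja
      exact abs_eq_zero.mp this
  rcases Finset.eq_empty_or_nonempty (univ.erase p) with hemp | hne2
  · have hr := row p
    rw [hemp, Finset.sum_empty] at hr
    rcases mul_eq_zero.mp hr with h | h
    · have := hdiag p; nlinarith
    · exact absurd (abs_eq_zero.mpr h) (ne_of_gt hvp)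
  · obtain ⟨q, hq, hqmax⟩ := Finset.exists_max_image _ (fun j => |v j|) hne2
    have hqp : q ≠ p := (Finset.mem_erase.mp hq).1
    have i1 : (μ - S p p) * |v p| ≤ S p p * |v q| := rowbd p q hqmax
    have i2 : (μ - S q q) * |v q| ≤ S q q * |v p| := rowbd q p (fun j _ => hp j (mem_univ j))
    rcases hpair p q (Ne.symm hqp) with hc | hc
    · refine micro' b a μ |v p| |v q| hb ha (by linarith) hvp (abs_nonneg _) ?_ ?_
      · nlinarith [i1, hc, abs_nonneg (v q), abs_nonneg (v p)]
      · nlinarith [i2, hdiag q, abs_nonneg (v q), abs_nonneg (v p)]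
    · refine micro' a b μ |v p| |v q| ha hb hcon hvp (abs_nonneg _) ?_ ?_
      · nlinarith [i1, hdiag p, abs_nonneg (v q), abs_nonneg (v p)]
      · nlinarith [i2, hc, abs_nonneg (v q), abs_nonneg (v p)]

/-- **Theorem 1 (upper bound for quivers).**
If `K` is the Kirchhoff matrix of a quiver (symmetric integer matrix with
nonpositive off-diagonal entries and nonnegative row sums) on `n ≥ 1` vertices,
then the `k`-th smallest eigenvalue satisfies `λ_k ≤ d_k + d_{k-1}`, where
`d_1 ≤ ⋯ ≤ d_n` are the sorted diagonal entries and `d_0 = 0`. -/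
theorem quiver_eigenvalue_upper_bound
    (n : ℕ) (hn : 1 ≤ n) (K : Matrix (Fin n) (Fin n) ℤ)
    (hsym : K.IsSymm)
    (hoff : ∀ i j : Fin n, i ≠ j → K i j ≤ 0)
    (hrow : ∀ i : Fin n, 0 ≤ ∑ j, K i j)
    (hK : (K.map (Int.cast : ℤ → ℝ)).IsHermitian)
    (lam : Fin n → ℝ)
    (hlam : lam = hK.eigenvalues ∘ Tuple.sort hK.eigenvalues)
    (d : Fin n → ℤ)
    (hd : d = (fun i => K i i) ∘ Tuple.sort (fun i => K i i)) :
    ∀ (k : ℕ) (hk1 : 1 ≤ k) (hkn : k ≤ n),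
      lam ⟨k - 1, by omega⟩ ≤
        (d ⟨k - 1, by omega⟩ : ℝ) +
          (if h : 2 ≤ k then (d ⟨k - 2, by omega⟩ : ℝ) else 0) := by
  intro k hk1 hkn
  set σd : Equiv.Perm (Fin n) := Tuple.sort (fun i => K i i) with hσd
  have hdval : ∀ j : Fin n, d j = K (σd j) (σd j) := by intro j; rw [hd]; rfl
  have hKdiag : ∀ i : Fin n, 0 ≤ K i i := by
    intro i
    have h1 := hrow i
    rw [← Finset.add_sum_erase _ _ (mem_univ i)] at h1
    have h2 : ∑ j ∈ univ.erase i, K i j ≤ 0 :=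
      Finset.sum_nonpos (fun j hj => hoff i j (Ne.symm (Finset.mem_erase.mp hj).1))
    linarith
  have hdmono : Monotone d := hd ▸ Tuple.monotone_sort (fun i => K i i)
  have hdnn : ∀ j : Fin n, (0 : ℤ) ≤ d j := fun j => (hdval j) ▸ hKdiag (σd j)
  have hlmono : Monotone lam := hlam ▸ Tuple.monotone_sort hK.eigenvalues
  set e : Fin k → Fin n := fun i => σd (Fin.castLE hkn i) with he
  have heinj : Function.Injective e :=
    σd.injective.comp (Fin.castLE_injective hkn)
  set S : Matrix (Fin k) (Fin k) ℝ :=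
    (K.map (Int.cast : ℤ → ℝ)).submatrix e e with hSdef
  have hS : S.IsHermitian := hK.submatrix e
  have hSdiag : ∀ p : Fin k, S p p = (d (Fin.castLE hkn p) : ℝ) := by
    intro p
    show (K.map (Int.cast : ℤ → ℝ)) (e p) (e p) = _
    rw [Matrix.map_apply, hdval]
  -- part 1 : lam ⟨k-1⟩ ≤ some eigenvalue of S
  have part1 : ∃ t : Fin k, lam ⟨k - 1, by omega⟩ ≤ hS.eigenvalues t := by
    set m : ℕ := k - 1 with hm
    have hmn : m < n := by omega
    set σ : Equiv.Perm (Fin n) := Tuple.sort hK.eigenvalues with hσ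
    set v : Fin n → EuclideanSpace ℝ (Fin n) := ⇑hK.eigenvectorBasis with hv
    set f : Fin (n - m) → Fin n := fun t => σ ⟨m + t, by omega⟩ with hf
    have hfinj : Function.Injective f := by
      intro s t hst
      have h1 := σ.injective hst
      have h2 : m + (s : ℕ) = m + (t : ℕ) := congrArg Fin.val h1
      exact Fin.ext (by omega)
    set W : Submodule ℝ (EuclideanSpace ℝ (Fin n)) :=
      Submodule.span ℝ (Set.range (v ∘ f)) with hW
    set bf : OrthonormalBasis (Fin n) ℝ (EuclideanSpace ℝ (Fin n)) :=
      EuclideanSpace.basisFun (Fin n) ℝ with hbf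
    set U : Submodule ℝ (EuclideanSpace ℝ (Fin n)) :=
      Submodule.span ℝ (Set.range (⇑bf ∘ e)) with hU
    have hWrank : Module.finrank ℝ W = n - m := by
      rw [hW, finrank_span_eq_card
        ((hK.eigenvectorBasis.orthonormal.linearIndependent).comp f hfinj)]
      simp
    have hUrank : Module.finrank ℝ U = k := by
      rw [hU, finrank_span_eq_card
        ((bf.orthonormal.linearIndependent).comp e heinj)]
      simp
    have hinf : U ⊓ W ≠ ⊥ := by
      intro hbot
      have h1 := Submodule.finrank_sup_add_finrank_inf_eq U W
      rw [hbot, finrank_bot, hWrank, hUrank] at h1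
      have h2 : Module.finrank ℝ (U ⊔ W : Submodule ℝ (EuclideanSpace ℝ (Fin n))) ≤ n := by
        have := Submodule.finrank_le (U ⊔ W)
        rwa [finrank_euclideanSpace_fin] at this
      omega
    obtain ⟨x, hxUW, hx0⟩ := Submodule.exists_mem_ne_zero_of_ne_bot hinf
    have hxU : x ∈ U := (Submodule.mem_inf.mp hxUW).1
    have hxW : x ∈ W := (Submodule.mem_inf.mp hxUW).2
    have hsupp : ∀ j : Fin n, j ∉ Set.range e → x j = 0 := by
      intro j hj
      have hUZ : U ≤
          { carrier := {y : EuclideanSpace ℝ (Fin n) | y j = 0}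
            add_mem' := by
              intro y z hy hz
              show y j + z j = 0
              rw [Set.mem_setOf_eq] at hy hz
              rw [hy, hz, add_zero]
            zero_mem' := rfl
            smul_mem' := by
              intro c y hy
              show c * y j = 0
              rw [Set.mem_setOf_eq] at hy
              rw [hy, mul_zero] } := by
        rw [hU]
        apply Submodule.span_le.mpr
        rintro _ ⟨i, rfl⟩
        show bf (e i) j = 0
        rw [hbf, EuclideanSpace.basisFun_apply, EuclideanSpace.single_apply]
        simp only [ite_eq_right_iff]
        intro hje
        exact absurd ⟨i, hje.symm⟩ hj
      exact hUZ hxU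
    have hcoord : ∀ i : Fin n, (i : ℕ) < m → ⟪v (σ i), x⟫ = 0 := by
      intro i hi
      refine Submodule.span_induction ?_ ?_ ?_ ?_ hxW
      · rintro _ ⟨t, rfl⟩
        apply hK.eigenvectorBasis.orthonormal.2
        intro hcontra
        have h1 : (i : ℕ) = m + (t : ℕ) := congrArg Fin.val (σ.injective hcontra)
        omega
      · exact inner_zero_right _
      · intro y z _ _ hy hz; rw [inner_add_right, hy, hz, add_zero]
      · intro c y _ hy; rw [inner_smul_right, hy, mul_zero]
    have hlow : lam ⟨k - 1, by omega⟩ * (x ⬝ᵥ x) ≤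
        x ⬝ᵥ ((K.map (Int.cast : ℤ → ℝ)) *ᵥ x) := by
      rw [quad_expand' n _ hK x, norm_expand' n _ hK x, Finset.mul_sum]
      rw [← Equiv.sum_comp σ (fun i => hK.eigenvalues i *
          (⟪(hK.eigenvectorBasis i : EuclideanSpace ℝ (Fin n)), x⟫)^2)]
      rw [← Equiv.sum_comp σ (fun i => lam ⟨k - 1, by omega⟩ *
          (⟪(hK.eigenvectorBasis i : EuclideanSpace ℝ (Fin n)), x⟫)^2)]
      apply Finset.sum_le_sum
      intro i _
      rcases lt_or_ge (i : ℕ) m with hi | hi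
      · have hz := hcoord i hi
        rw [hv] at hz
        rw [hz]
        simp
      · have h1 : lam ⟨k - 1, by omega⟩ ≤ lam i := by
          apply hlmono
          show (k - 1 : ℕ) ≤ (i : ℕ)
          omega
        have h2 : lam i = hK.eigenvalues (σ i) := by rw [hlam]; rfl
        rw [← h2]
        exact mul_le_mul_of_nonneg_right h1 (sq_nonneg _)
    set y : Fin k → ℝ := fun i => x (e i) with hy
    have sum_transfer : ∀ g : Fin n → ℝ, ∑ j, x j * g j = ∑ i, x (e i) * g (e i) := by
      intro g
      calc ∑ j, x j * g j = ∑ j ∈ univ.image e, x j * g j := by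
            symm
            apply Finset.sum_subset (Finset.subset_univ _)
            intro j _ hj
            have hjr : j ∉ Set.range e := by
              rintro ⟨i, hi⟩
              exact hj (Finset.mem_image.mpr ⟨i, mem_univ i, hi⟩)
            rw [hsupp j hjr, zero_mul]
        _ = ∑ i, x (e i) * g (e i) :=
            Finset.sum_image (fun i _ j _ hij => heinj hij)
    have heq1 : (x ⬝ᵥ x : ℝ) = y ⬝ᵥ y := by
      rw [dotProduct, dotProduct]
      exact sum_transfer x
    have heq2 : (x ⬝ᵥ ((K.map (Int.cast : ℤ → ℝ)) *ᵥ x) : ℝ) = y ⬝ᵥ (S *ᵥ y) := by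
      rw [dotProduct, dotProduct]
      rw [sum_transfer ((K.map (Int.cast : ℤ → ℝ)) *ᵥ x)]
      apply Finset.sum_congr rfl
      intro i _
      congr 1
      show ((K.map (Int.cast : ℤ → ℝ)) *ᵥ x) (e i) = (S *ᵥ y) i
      rw [mulVec, mulVec, dotProduct, dotProduct]
      have hmc : ∀ j, (K.map (Int.cast : ℤ → ℝ)) (e i) j * x j
          = x j * (K.map (Int.cast : ℤ → ℝ)) (e i) j := fun j => mul_comm _ _
      simp_rw [hmc]
      rw [sum_transfer ((K.map (Int.cast : ℤ → ℝ)) (e i))]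
      apply Finset.sum_congr rfl
      intro i' _
      rw [mul_comm]
      rfl
    have hxx : (0 : ℝ) < x ⬝ᵥ x := by
      rw [← inner_eq_dot' n x x, real_inner_self_eq_norm_sq]
      have hnp : 0 < ‖x‖ := norm_pos_iff.mpr hx0
      positivity
    have hkne : (univ : Finset (Fin k)).Nonempty := by
      have h0 : (0 : ℕ) < k := hk1
      exact ⟨⟨0, h0⟩, mem_univ _⟩
    obtain ⟨t0, -, ht0⟩ := Finset.exists_max_image univ hS.eigenvalues hkne
    refine ⟨t0, ?_⟩
    have hub : (y ⬝ᵥ (S *ᵥ y) : ℝ) ≤ hS.eigenvalues t0 * (y ⬝ᵥ y) := by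
      have hq := quad_expand' k S hS (WithLp.toLp 2 y)
      have hn := norm_expand' k S hS (WithLp.toLp 2 y)
      simp only [WithLp.ofLp_toLp] at hq hn
      rw [hq, hn, Finset.mul_sum]
      apply Finset.sum_le_sum
      intro t _
      exact mul_le_mul_of_nonneg_right (ht0 t (mem_univ t)) (sq_nonneg _)
    have hyy : (0 : ℝ) < y ⬝ᵥ y := heq1 ▸ hxx
    have hchain : lam ⟨k - 1, by omega⟩ * (y ⬝ᵥ y) ≤ hS.eigenvalues t0 * (y ⬝ᵥ y) := by
      calc lam ⟨k - 1, by omega⟩ * (y ⬝ᵥ y)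
          = lam ⟨k - 1, by omega⟩ * (x ⬝ᵥ x) := by rw [heq1]
        _ ≤ x ⬝ᵥ ((K.map (Int.cast : ℤ → ℝ)) *ᵥ x) := hlow
        _ = y ⬝ᵥ (S *ᵥ y) := heq2
        _ ≤ hS.eigenvalues t0 * (y ⬝ᵥ y) := hub
    exact le_of_mul_le_mul_right hchain hyy
  -- part 2
  obtain ⟨t0, ht0⟩ := part1
  set a : ℝ := (d ⟨k - 1, by omega⟩ : ℝ) with ha
  set b : ℝ := (if h : 2 ≤ k then (d ⟨k - 2, by omega⟩ : ℝ) else 0) with hb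
  have hb0 : 0 ≤ b := by
    rw [hb]
    split
    · exact_mod_cast hdnn _
    · exact le_refl 0
  have ha0 : 0 ≤ a := by rw [ha]; exact_mod_cast hdnn _
  have hrowS : ∀ p : Fin k, ∑ j ∈ Finset.univ.erase p, |S p j| ≤ S p p := by
    intro p
    have habs : ∀ j ∈ Finset.univ.erase p,
        |S p j| = -((K.map (Int.cast : ℤ → ℝ)) (e p) (e j)) := by
      intro j hj
      have hne : e j ≠ e p := fun hc => (Finset.mem_erase.mp hj).1 (heinj hc)
      have h1 : (K.map (Int.cast : ℤ → ℝ)) (e p) (e j) ≤ 0 := by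
        rw [Matrix.map_apply]
        exact_mod_cast hoff (e p) (e j) (Ne.symm hne)
      show |(K.map (Int.cast : ℤ → ℝ)) (e p) (e j)| = _
      rw [abs_of_nonpos h1]
    rw [Finset.sum_congr rfl habs]
    have h2 : ∑ j ∈ Finset.univ.erase p, -((K.map (Int.cast : ℤ → ℝ)) (e p) (e j)) =
        ∑ j' ∈ (Finset.univ.erase p).image e, -((K.map (Int.cast : ℤ → ℝ)) (e p) j') := by
      rw [Finset.sum_image (fun i _ j _ hij => heinj hij)]
    rw [h2]
    have hsub : (Finset.univ.erase p).image e ⊆ Finset.univ.erase (e p) := by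
      intro j' hj'
      obtain ⟨j, hj, rfl⟩ := Finset.mem_image.mp hj'
      exact Finset.mem_erase.mpr ⟨fun hc => (Finset.mem_erase.mp hj).1 (heinj hc), mem_univ _⟩
    have h3 : ∑ j' ∈ (Finset.univ.erase p).image e, -((K.map (Int.cast : ℤ → ℝ)) (e p) j') ≤
        ∑ j' ∈ Finset.univ.erase (e p), -((K.map (Int.cast : ℤ → ℝ)) (e p) j') := by
      apply Finset.sum_le_sum_of_subset_of_nonneg hsub
      intro j' hj' _
      have h4 : (K.map (Int.cast : ℤ → ℝ)) (e p) j' ≤ 0 := by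
        rw [Matrix.map_apply]
        exact_mod_cast hoff (e p) j' (fun hc => (Finset.mem_erase.mp hj').1 hc.symm)
      linarith
    refine h3.trans ?_
    have h5 : (0 : ℝ) ≤ ∑ j', (K.map (Int.cast : ℤ → ℝ)) (e p) j' := by
      have hc : ∑ j', ((K (e p) j' : ℤ) : ℝ) = ((∑ j', K (e p) j' : ℤ) : ℝ) := by
        push_cast; rfl
      show (0:ℝ) ≤ ∑ j', ((K (e p) j' : ℤ) : ℝ)
      rw [hc]
      exact_mod_cast hrow (e p)
    have h7 : ∑ j' ∈ Finset.univ.erase (e p), -((K.map (Int.cast : ℤ → ℝ)) (e p) j') =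
        (K.map (Int.cast : ℤ → ℝ)) (e p) (e p) - ∑ j', (K.map (Int.cast : ℤ → ℝ)) (e p) j' := by
      rw [← Finset.add_sum_erase _ (fun j' => (K.map (Int.cast : ℤ → ℝ)) (e p) j')
        (mem_univ (e p))]
      rw [Finset.sum_neg_distrib]
      ring
    rw [h7]
    have h8 : S p p = (K.map (Int.cast : ℤ → ℝ)) (e p) (e p) := rfl
    rw [h8]
    linarith
  have hdiagS : ∀ p : Fin k, S p p ≤ a := by
    intro p
    rw [hSdiag p, ha]
    have hmono1 : d (Fin.castLE hkn p) ≤ d ⟨k - 1, by omega⟩ := by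
      apply hdmono
      show ((Fin.castLE hkn p) : ℕ) ≤ k - 1
      have := p.2
      simp only [Fin.coe_castLE]
      omega
    exact_mod_cast hmono1
  have hpairS : ∀ p q : Fin k, p ≠ q → S p p ≤ b ∨ S q q ≤ b := by
    intro p q hpq
    by_cases hk2 : 2 ≤ k
    · have hdle : ∀ r : Fin k, (r : ℕ) ≤ k - 2 → S r r ≤ b := by
        intro r hr
        rw [hSdiag r, hb, dif_pos hk2]
        have hmono2 : d (Fin.castLE hkn r) ≤ d ⟨k - 2, by omega⟩ := by
          apply hdmono
          show ((Fin.castLE hkn r) : ℕ) ≤ k - 2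
          simpa using hr
        exact_mod_cast hmono2
      have hor : (p : ℕ) ≤ k - 2 ∨ (q : ℕ) ≤ k - 2 := by
        have hp := p.2; have hq := q.2
        by_contra hcon
        push_neg at hcon
        exact hpq (Fin.ext (by omega))
      rcases hor with h | h
      · exact Or.inl (hdle p h)
      · exact Or.inr (hdle q h)
    · exfalso
      have hk1' : k = 1 := by omega
      subst hk1'
      exact hpq (Subsingleton.elim p q)
  have hveq : S *ᵥ ⇑(hS.eigenvectorBasis t0) = hS.eigenvalues t0 • ⇑(hS.eigenvectorBasis t0) :=
    hS.mulVec_eigenvectorBasis t0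
  have hvne : (⇑(hS.eigenvectorBasis t0) : Fin k → ℝ) ≠ 0 := by
    intro hc
    exact hS.eigenvectorBasis.orthonormal.ne_zero t0 (by simpa using congrArg (WithLp.toLp 2) hc)
  have hfinal := cassini' S a b ha0 hb0 hrowS hdiagS hpairS
    (hS.eigenvalues t0) _ hvne hveq
  calc lam ⟨k - 1, by omega⟩ ≤ hS.eigenvalues t0 := ht0
    _ ≤ a + b := hfinal
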